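/- arXiv:2603.28202 — 2 statements merged into one kernel-verified Lean document; each statement's English description precedes it below -/
import Mathlib

section
/- Let n ≥ 6 and 0 < μ, θ < 1. Let H be a 3-graph on n vertices that is (μ, θ)-dense. Then there exists a spanning subgraph H' of H (same vertex set, E(H') ⊆ E(H)) that is strongly (μ − 8θ^{1/4}, θ + θ^{1/4})-dense, and moreover |E(H) \ E(H')| ≤ 8θ^{1/2}·(n choose 3). -/
open Finset

/-- A 3-graph on `n` vertices (with edge set `E`) is `(μ, θ)`-dense: there is a
set `S` of at most `θ·(n choose 2)` pairs of vertices such that every pair not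
in `S` has degree at least `μ(n - 2)`. -/
def IsDense {V : Type*} [Fintype V] [DecidableEq V] (E : Finset (Finset V))
    (n : ℕ) (μ θ : ℝ) : Prop :=
  ∃ S : Finset (Finset V), (∀ P ∈ S, P.card = 2) ∧
    (S.card : ℝ) ≤ θ * n.choose 2 ∧
    ∀ P : Finset V, P.card = 2 → P ∉ S →
      μ * ((n : ℝ) - 2) ≤ ((E.filter fun e => P ⊆ e).card : ℝ)

/-- A 3-graph is strongly `(μ, θ)`-dense: it is `(μ, θ)`-dense and every pair of
vertices contained in at least one edge has degree at least `μ(n - 2)`. -/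
def IsStronglyDense {V : Type*} [Fintype V] [DecidableEq V]
    (E : Finset (Finset V)) (n : ℕ) (μ θ : ℝ) : Prop :=
  IsDense E n μ θ ∧
    ∀ P : Finset V, P.card = 2 → 0 < (E.filter fun e => P ⊆ e).card →
      μ * ((n : ℝ) - 2) ≤ ((E.filter fun e => P ⊆ e).card : ℝ)

set_option maxHeartbeats 1000000 in
/-- Every `(μ, θ)`-dense 3-graph on `n ≥ 6` vertices has a spanning subgraph
which is strongly `(μ − 8θ^{1/4}, θ + θ^{1/4})`-dense, obtained by removing at
most `8θ^{1/2}·(n choose 3)` edges. -/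
theorem strongly_dense_subgraph {V : Type*} [Fintype V] [DecidableEq V]
    (n : ℕ) (hn : n = Fintype.card V) (h6 : 6 ≤ n)
    (μ θ : ℝ) (hμ0 : 0 < μ) (hμ1 : μ < 1) (hθ0 : 0 < θ) (hθ1 : θ < 1)
    (E : Finset (Finset V)) (h3 : ∀ e ∈ E, e.card = 3)
    (hdense : IsDense E n μ θ) :
    ∃ E' ⊆ E, IsStronglyDense E' n (μ - 8 * θ ^ ((1 : ℝ) / 4)) (θ + θ ^ ((1 : ℝ) / 4)) ∧
      ((E \ E').card : ℝ) ≤ 8 * θ ^ ((1 : ℝ) / 2) * n.choose 3 := by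
  classical
  have hnR : (6:ℝ) ≤ (n:ℝ) := by exact_mod_cast h6
  have h4p : (0:ℝ) < θ ^ ((1:ℝ)/4) := Real.rpow_pos_of_pos hθ0 _
  have h2p : (0:ℝ) < θ ^ ((1:ℝ)/2) := Real.rpow_pos_of_pos hθ0 _
  have hhalf_le : θ ^ ((1:ℝ)/2) ≤ θ ^ ((1:ℝ)/4) :=
    Real.rpow_le_rpow_of_exponent_ge hθ0 hθ1.le (by norm_num)
  have hθ_le : θ ≤ θ ^ ((1:ℝ)/2) := by
    nth_rewrite 1 [← Real.rpow_one θ]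
    exact Real.rpow_le_rpow_of_exponent_ge hθ0 hθ1.le (by norm_num)
  have hmulθ : θ ^ ((1:ℝ)/2) * θ ^ ((1:ℝ)/2) = θ := by
    rw [← Real.rpow_add hθ0]; norm_num
  have hmulq : θ ^ ((1:ℝ)/4) * θ ^ ((1:ℝ)/4) = θ ^ ((1:ℝ)/2) := by
    rw [← Real.rpow_add hθ0]; norm_num
  have hc2v : ((n.choose 2 : ℕ) : ℝ) = (n:ℝ) * ((n:ℝ)-1)/2 := Nat.cast_choose_two ℝ n
  have hc3v : ((n.choose 3 : ℕ) : ℝ) = (n:ℝ) * ((n:ℝ)-1) * ((n:ℝ)-2)/6 := by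
    have h := Nat.choose_succ_right_eq n 2
    have h' : ((n.choose 3 : ℕ) : ℝ) * 3 = ((n.choose 2 : ℕ) : ℝ) * ((n:ℝ) - 2) := by
      have := congrArg (fun m : ℕ => (m : ℝ)) h
      push_cast [Nat.cast_sub (show 2 ≤ n by omega)] at this
      linarith [this]
    rw [hc2v] at h'
    linarith
  have hcmv : (((n-1).choose 2 : ℕ) : ℝ) = ((n:ℝ)-1) * ((n:ℝ)-2)/2 := by
    have := Nat.cast_choose_two ℝ (n-1)
    rw [this]
    push_cast [Nat.cast_sub (show 1 ≤ n by omega)]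
    ring
  have hc2pos : (0:ℝ) ≤ ((n.choose 2 : ℕ) : ℝ) := by positivity
  have hc3pos : (0:ℝ) ≤ ((n.choose 3 : ℕ) : ℝ) := by positivity
  rcases le_or_gt (1/64 : ℝ) θ with h64 | h64
  · -- trivial case: take E' = ∅
    have hq8 : (1:ℝ) ≤ 8 * θ ^ ((1:ℝ)/4) := by
      have h1 : ((1:ℝ)/4096) ^ ((1:ℝ)/4) ≤ θ ^ ((1:ℝ)/4) :=
        Real.rpow_le_rpow (by norm_num) (by linarith) (by norm_num)
      have h2 : ((1:ℝ)/4096) ^ ((1:ℝ)/4) = 1/8 := by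
        rw [show (1/4096:ℝ) = ((1:ℝ)/8)^(4:ℕ) by norm_num,
          ← Real.rpow_natCast ((1:ℝ)/8) 4, ← Real.rpow_mul (by norm_num)]
        norm_num
      linarith
    have hq8' : (1:ℝ) ≤ 8 * θ ^ ((1:ℝ)/2) := by
      have h1 : ((1:ℝ)/64) ^ ((1:ℝ)/2) ≤ θ ^ ((1:ℝ)/2) :=
        Real.rpow_le_rpow (by norm_num) h64 (by norm_num)
      have h2 : ((1:ℝ)/64) ^ ((1:ℝ)/2) = 1/8 := by
        rw [show (1/64:ℝ) = ((1:ℝ)/8)^(2:ℕ) by norm_num,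
          ← Real.rpow_natCast ((1:ℝ)/8) 2, ← Real.rpow_mul (by norm_num)]
        norm_num
      linarith
    refine ⟨∅, empty_subset _, ⟨⟨∅, by simp, by simp; positivity, ?_⟩, ?_⟩, ?_⟩
    · intro P hP _
      simp only [Finset.filter_empty, Finset.card_empty, Nat.cast_zero]
      nlinarith [hnR]
    · intro P hP hpos
      simp [Finset.filter_empty] at hpos
    · rw [Finset.sdiff_empty]
      have hE : E ⊆ (univ : Finset V).powersetCard 3 := fun e he =>
        mem_powersetCard.mpr ⟨subset_univ e, h3 e he⟩
      have hcard : E.card ≤ n.choose 3 := by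
        have := card_le_card hE
        rwa [card_powersetCard, card_univ, ← hn] at this
      have : (E.card : ℝ) ≤ ((n.choose 3 : ℕ) : ℝ) := by exact_mod_cast hcard
      nlinarith
  · -- main case
    have hq_half : θ ^ ((1:ℝ)/4) ≤ 1/2 := by
      have h1 : θ ^ ((1:ℝ)/4) ≤ ((1:ℝ)/16) ^ ((1:ℝ)/4) :=
        Real.rpow_le_rpow hθ0.le (by linarith) (by norm_num)
      have h2 : ((1:ℝ)/16) ^ ((1:ℝ)/4) = 1/2 := by
        rw [show (1/16:ℝ) = ((1:ℝ)/2)^(4:ℕ) by norm_num,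
          ← Real.rpow_natCast ((1:ℝ)/2) 4, ← Real.rpow_mul (by norm_num)]
        norm_num
      linarith
    obtain ⟨S, hS2, hScard, hSdeg⟩ := hdense
    set B1 : Finset (Finset V) :=
      S.filter (fun P => ((E.filter fun e => P ⊆ e).card : ℝ) < μ * ((n:ℝ)-2)) with hB1
    set b : V → ℕ := fun v => (B1.filter fun P => v ∈ P).card with hb
    set Bad : Finset V := univ.filter (fun v => θ ^ ((1:ℝ)/2) * n < (b v : ℝ)) with hBad
    set E' : Finset (Finset V) :=
      E.filter (fun e => (∀ Q ∈ B1, ¬ Q ⊆ e) ∧ ∀ v ∈ Bad, v ∉ e) with hE'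
    have hB1S : B1 ⊆ S := filter_subset _ _
    have hB1two : ∀ Q ∈ B1, Q.card = 2 := fun Q hQ => hS2 Q (hB1S hQ)
    have hB1R : (B1.card : ℝ) ≤ θ * n.choose 2 :=
      le_trans (by exact_mod_cast card_le_card hB1S) hScard
    have hGood : ∀ v : V, v ∉ Bad → (b v : ℝ) ≤ θ ^ ((1:ℝ)/2) * n := by
      intro v hv
      rw [hBad, mem_filter] at hv
      push_neg at hv
      exact hv (mem_univ v)
    have hsumb : ∑ v, b v = 2 * B1.card := by
      calc ∑ v, b v = ∑ v, ∑ P ∈ B1, if v ∈ P then 1 else 0 := by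
            refine Finset.sum_congr rfl fun v _ => ?_
            rw [hb]
            exact Finset.card_filter _ _
        _ = ∑ P ∈ B1, ∑ v, if v ∈ P then 1 else 0 := Finset.sum_comm
        _ = ∑ P ∈ B1, P.card := by
            refine Finset.sum_congr rfl fun P _ => ?_
            rw [← Finset.card_filter]
            congr 1
            exact Finset.filter_univ_mem P
        _ = ∑ _P ∈ B1, 2 := Finset.sum_congr rfl hB1two
        _ = 2 * B1.card := by rw [Finset.sum_const, smul_eq_mul, mul_comm]
    have hBadR : (Bad.card : ℝ) ≤ θ ^ ((1:ℝ)/2) * ((n:ℝ)-1) := by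
      have hsum2 : (Bad.card : ℝ) * (θ ^ ((1:ℝ)/2) * n) ≤ ∑ v ∈ Bad, (b v : ℝ) := by
        have h := Finset.card_nsmul_le_sum Bad (fun v => (b v : ℝ)) (θ ^ ((1:ℝ)/2) * n)
          (fun v hv => by
            rw [hBad, mem_filter] at hv
            exact hv.2.le)
        simpa [nsmul_eq_mul] using h
      have hsum1 : ∑ v ∈ Bad, (b v : ℝ) ≤ ∑ v, (b v : ℝ) :=
        Finset.sum_le_sum_of_subset_of_nonneg (subset_univ Bad)
          (fun v _ _ => Nat.cast_nonneg _)
      have hsum3 : ∑ v, (b v : ℝ) = 2 * B1.card := by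
        rw [← Nat.cast_sum]
        exact_mod_cast congrArg (fun m : ℕ => (m:ℝ)) hsumb
      have hpos : (0:ℝ) < θ ^ ((1:ℝ)/2) * n := by positivity
      have hkey : (Bad.card : ℝ) * (θ ^ ((1:ℝ)/2) * n)
          ≤ (θ ^ ((1:ℝ)/2) * ((n:ℝ)-1)) * (θ ^ ((1:ℝ)/2) * n) := by
        have hr : (θ ^ ((1:ℝ)/2) * ((n:ℝ)-1)) * (θ ^ ((1:ℝ)/2) * (n:ℝ))
            = θ * ((n:ℝ) * ((n:ℝ)-1)) := by
          calc (θ ^ ((1:ℝ)/2) * ((n:ℝ)-1)) * (θ ^ ((1:ℝ)/2) * (n:ℝ))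
              = (θ ^ ((1:ℝ)/2) * θ ^ ((1:ℝ)/2)) * (((n:ℝ)-1) * n) := by ring
            _ = θ * ((n:ℝ) * ((n:ℝ)-1)) := by rw [hmulθ]; ring
        rw [hr]
        rw [hc2v] at hB1R
        linarith [hsum2, hsum1, hsum3, hB1R]
      exact le_of_mul_le_mul_right hkey hpos
    -- the key degree estimate
    have key : ∀ a c : V, a ≠ c → a ∉ Bad → c ∉ Bad → ({a,c} : Finset V) ∉ B1 →
        μ * ((n:ℝ)-2) ≤ ((E.filter fun e => ({a,c}:Finset V) ⊆ e).card : ℝ) →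
        (μ - 8 * θ ^ ((1:ℝ)/4)) * ((n:ℝ)-2)
          ≤ ((E'.filter fun e => ({a,c}:Finset V) ⊆ e).card : ℝ) := by
      intro a c hac haB hcB hPB1 hdegE
      set P : Finset V := {a,c} with hP
      have hPcard : P.card = 2 := card_pair hac
      set A := E.filter (fun e => P ⊆ e) with hA
      set R := A.filter (fun e => ¬((∀ Q ∈ B1, ¬ Q ⊆ e) ∧ ∀ v ∈ Bad, v ∉ e)) with hR
      have hsplit : A.card ≤ (E'.filter fun e => P ⊆ e).card + R.card := by
        have hsub : A ⊆ (E'.filter fun e => P ⊆ e) ∪ R := by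
          intro e he
          obtain ⟨heE, hPe⟩ := mem_filter.mp he
          by_cases hpred : (∀ Q ∈ B1, ¬ Q ⊆ e) ∧ ∀ v ∈ Bad, v ∉ e
          · exact mem_union_left _ (mem_filter.mpr ⟨mem_filter.mpr ⟨heE, hpred⟩, hPe⟩)
          · exact mem_union_right _ (mem_filter.mpr ⟨he, hpred⟩)
        exact (card_le_card hsub).trans (card_union_le _ _)
      set T : Finset V := Bad ∪ univ.filter
        (fun x => (insert a {x} : Finset V) ∈ B1 ∨ (insert c {x} : Finset V) ∈ B1) with hT
      have hRT : R.card ≤ T.card := by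
        have h1 : R.card ≤ (T.image fun x => ({x} : Finset V)).card := by
          apply Finset.card_le_card_of_injOn (fun e => e \ P)
          · intro e heR
            obtain ⟨heA, hnpred⟩ := mem_filter.mp heR
            obtain ⟨heE, hPe⟩ := mem_filter.mp heA
            have he3 : e.card = 3 := h3 e heE
            have hd1 : (e \ P).card = 1 := by
              rw [card_sdiff_of_subset hPe, he3, hPcard]
            obtain ⟨x, hx⟩ := Finset.card_eq_one.mp hd1
            have hxe : x ∈ e ∧ x ∉ P := by
              have hxx : x ∈ e \ P := hx ▸ mem_singleton_self x
              exact ⟨(mem_sdiff.mp hxx).1, (mem_sdiff.mp hxx).2⟩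
            have hee : e = insert x P := by
              have h1 := Finset.sdiff_union_of_subset hPe
              rw [hx] at h1
              rw [← h1]
              ext y; simp [or_comm]
            show e \ P ∈ _
            rw [hx]
            refine mem_image.mpr ⟨x, ?_, rfl⟩
            rw [not_and_or] at hnpred
            rcases hnpred with hQ | hv
            · push_neg at hQ
              obtain ⟨Q, hQB, hQe⟩ := hQ
              have hQ2 : Q.card = 2 := hB1two Q hQB
              have hxQ : x ∈ Q := by
                by_contra hxQ
                have hQP : Q ⊆ P := by
                  intro y hy
                  have hye := hQe hy
                  rw [hee] at hye
                  rcases mem_insert.mp hye with rfl | h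
                  · exact absurd hy hxQ
                  · exact h
                have : Q = P := Finset.eq_of_subset_of_card_le hQP (by rw [hQ2, hPcard])
                exact hPB1 (this ▸ hQB)
              obtain ⟨w, hw⟩ := Finset.card_eq_one.mp
                (show (Q.erase x).card = 1 by rw [Finset.card_erase_of_mem hxQ, hQ2])
              have hwQ : w ∈ Q := Finset.mem_of_mem_erase (hw ▸ mem_singleton_self w)
              have hwx : w ≠ x := Finset.ne_of_mem_erase (hw ▸ mem_singleton_self w)
              have hwP : w ∈ P := by
                have hwe : w ∈ e := hQe hwQ
                rw [hee] at hwe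
                rcases mem_insert.mp hwe with h | h
                · exact absurd h hwx
                · exact h
              have hQeq : Q = insert w {x} := by
                have h1 : Q = insert x (Q.erase x) := (Finset.insert_erase hxQ).symm
                rw [h1, hw]
                ext y; simp [or_comm]
              refine mem_union.mpr (Or.inr (mem_filter.mpr ⟨mem_univ x, ?_⟩))
              rcases mem_insert.mp hwP with rfl | h
              · exact Or.inl (hQeq ▸ hQB)
              · have hwc : w = c := mem_singleton.mp h
                subst hwc
                exact Or.inr (hQeq ▸ hQB)
            · push_neg at hv
              obtain ⟨v, hvB, hve⟩ := hv
              have hvP : v ∉ P := by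
                intro hvP
                rcases mem_insert.mp hvP with rfl | h
                · exact haB hvB
                · have : v = c := mem_singleton.mp h
                  exact hcB (this ▸ hvB)
              have hvx : v ∈ e \ P := mem_sdiff.mpr ⟨hve, hvP⟩
              rw [hx] at hvx
              have : v = x := mem_singleton.mp hvx
              exact mem_union.mpr (Or.inl (this ▸ hvB))
          · intro e1 h1 e2 h2 hf
            have hP1 : P ⊆ e1 := (mem_filter.mp (mem_filter.mp h1).1).2
            have hP2 : P ⊆ e2 := (mem_filter.mp (mem_filter.mp h2).1).2
            have := congrArg (· ∪ P) hf
            simpa [Finset.sdiff_union_of_subset hP1, Finset.sdiff_union_of_subset hP2]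
              using this
        exact h1.trans Finset.card_image_le
      have hfa : ∀ d : V, d ∉ Bad →
          ((univ.filter fun x => (insert d {x} : Finset V) ∈ B1).card : ℝ)
            ≤ θ ^ ((1:ℝ)/2) * n := by
        intro d hd
        have hcard : (univ.filter fun x => (insert d {x} : Finset V) ∈ B1).card ≤ b d := by
          rw [hb]
          apply Finset.card_le_card_of_injOn (fun x => insert d {x})
          · intro x hx
            exact mem_filter.mpr ⟨(mem_filter.mp hx).2, mem_insert_self d {x}⟩
          · intro x hx y hy hxy
            simp only [coe_filter, Set.mem_setOf_eq] at hx hy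
            have hxB : (insert d {x} : Finset V) ∈ B1 := hx.2
            have hx2 : x ≠ d := by
              intro h; subst h
              have h2 : (insert x ({x}:Finset V)).card = 2 := hB1two _ hxB
              simp at h2
            have hxy' : (insert d {x} : Finset V) = insert d {y} := hxy
            have hxm : x ∈ insert d ({y} : Finset V) := by
              rw [← hxy']; exact mem_insert_of_mem (mem_singleton_self x)
            rcases mem_insert.mp hxm with h | h
            · exact absurd h hx2
            · exact mem_singleton.mp h
        exact le_trans (by exact_mod_cast hcard) (hGood d hd)
      have hTb : (T.card : ℝ) ≤ θ ^ ((1:ℝ)/2) * ((n:ℝ)-1)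
          + (θ ^ ((1:ℝ)/2) * n + θ ^ ((1:ℝ)/2) * n) := by
        have h1 : T.card ≤ Bad.card
            + (univ.filter (fun x => (insert a {x} : Finset V) ∈ B1
                ∨ (insert c {x} : Finset V) ∈ B1)).card := card_union_le _ _
        have h2 : (univ.filter (fun x => (insert a {x} : Finset V) ∈ B1
              ∨ (insert c {x} : Finset V) ∈ B1)).card
            ≤ (univ.filter fun x => (insert a {x} : Finset V) ∈ B1).card
              + (univ.filter fun x => (insert c {x} : Finset V) ∈ B1).card := by
          refine le_trans (card_le_card ?_) (card_union_le _ _)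
          intro x hx
          rcases (mem_filter.mp hx).2 with h | h
          · exact mem_union_left _ (mem_filter.mpr ⟨mem_univ x, h⟩)
          · exact mem_union_right _ (mem_filter.mpr ⟨mem_univ x, h⟩)
        have ha' := hfa a haB
        have hc' := hfa c hcB
        have h12 : T.card ≤ Bad.card
            + ((univ.filter fun x => (insert a {x} : Finset V) ∈ B1).card
              + (univ.filter fun x => (insert c {x} : Finset V) ∈ B1).card) :=
          le_trans h1 (Nat.add_le_add_left h2 _)
        have h1R : (T.card : ℝ) ≤ (Bad.card : ℝ)
            + (((univ.filter fun x => (insert a {x} : Finset V) ∈ B1).card : ℝ)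
              + ((univ.filter fun x => (insert c {x} : Finset V) ∈ B1).card : ℝ)) := by
          exact_mod_cast h12
        linarith
      -- now finish numerically
      have hAE : μ * ((n:ℝ)-2) ≤ (A.card : ℝ) := hdegE
      have hsplitR : (A.card : ℝ) ≤ ((E'.filter fun e => P ⊆ e).card : ℝ) + (R.card : ℝ) := by
        exact_mod_cast hsplit
      have hRR : (R.card : ℝ) ≤ (T.card : ℝ) := by exact_mod_cast hRT
      nlinarith [mul_nonneg (sub_nonneg.mpr hhalf_le) (by linarith : (0:ℝ) ≤ 3*(n:ℝ)-1),
        mul_nonneg h4p.le (by linarith : (0:ℝ) ≤ 5*(n:ℝ)-15)]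
    -- removal bound
    have hRem : ((E \ E').card : ℝ) ≤ 8 * θ ^ ((1:ℝ)/2) * n.choose 3 := by
      have hsub : E \ E' ⊆ (B1.biUnion fun Q => E.filter fun e => Q ⊆ e)
          ∪ (Bad.biUnion fun v => E.filter fun e => v ∈ e) := by
        intro e he
        obtain ⟨heE, heE'⟩ := mem_sdiff.mp he
        have hnp : ¬((∀ Q ∈ B1, ¬ Q ⊆ e) ∧ ∀ v ∈ Bad, v ∉ e) := by
          intro hp; exact heE' (mem_filter.mpr ⟨heE, hp⟩)
        rw [not_and_or] at hnp
        rcases hnp with h | h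
        · push_neg at h; obtain ⟨Q, hQ, hQe⟩ := h
          exact mem_union_left _ (mem_biUnion.mpr ⟨Q, hQ, mem_filter.mpr ⟨heE, hQe⟩⟩)
        · push_neg at h; obtain ⟨v, hv, hve⟩ := h
          exact mem_union_right _ (mem_biUnion.mpr ⟨v, hv, mem_filter.mpr ⟨heE, hve⟩⟩)
      have h1 : (E \ E').card ≤ ∑ Q ∈ B1, (E.filter fun e => Q ⊆ e).card
          + ∑ v ∈ Bad, (E.filter fun e => v ∈ e).card :=
        le_trans (card_le_card hsub) (le_trans (card_union_le _ _)
          (add_le_add (card_biUnion_le) (card_biUnion_le)))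
      have h2 : ∀ Q ∈ B1, ((E.filter fun e => Q ⊆ e).card : ℝ) ≤ (n:ℝ) - 2 := by
        intro Q hQ
        have hlt := (mem_filter.mp hQ).2
        nlinarith [hlt]
      have h3v : ∀ v : V, ((E.filter fun e => v ∈ e).card : ℝ)
          ≤ (((n-1).choose 2 : ℕ) : ℝ) := by
        intro v
        have hnat : (E.filter fun e => v ∈ e).card ≤ ((univ.erase v).powersetCard 2).card := by
          apply card_le_card_of_injOn (fun e => e.erase v)
          · intro e he
            obtain ⟨heE, hve⟩ := mem_filter.mp he
            refine mem_powersetCard.mpr ⟨erase_subset_erase v (subset_univ e), ?_⟩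
            rw [card_erase_of_mem hve, h3 e heE]
          · intro e1 hh1 e2 hh2 hf
            have hv1 : v ∈ e1 := (mem_filter.mp hh1).2
            have hv2 : v ∈ e2 := (mem_filter.mp hh2).2
            rw [← insert_erase hv1, ← insert_erase hv2]
            exact congrArg (insert v) hf
        rw [card_powersetCard, card_erase_of_mem (mem_univ v), card_univ, ← hn] at hnat
        exact_mod_cast hnat
      have hs1 : ((∑ Q ∈ B1, (E.filter fun e => Q ⊆ e).card : ℕ) : ℝ)
          ≤ (B1.card : ℝ) * ((n:ℝ)-2) := by
        rw [Nat.cast_sum]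
        calc ∑ Q ∈ B1, ((E.filter fun e => Q ⊆ e).card : ℝ)
            ≤ ∑ _Q ∈ B1, ((n:ℝ)-2) := Finset.sum_le_sum h2
          _ = (B1.card : ℝ) * ((n:ℝ)-2) := by rw [Finset.sum_const, nsmul_eq_mul]
      have hs2 : ((∑ v ∈ Bad, (E.filter fun e => v ∈ e).card : ℕ) : ℝ)
          ≤ (Bad.card : ℝ) * (((n-1).choose 2 : ℕ) : ℝ) := by
        rw [Nat.cast_sum]
        calc ∑ v ∈ Bad, ((E.filter fun e => v ∈ e).card : ℝ)
            ≤ ∑ _v ∈ Bad, (((n-1).choose 2 : ℕ) : ℝ) :=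
              Finset.sum_le_sum (fun v _ => h3v v)
          _ = (Bad.card : ℝ) * (((n-1).choose 2 : ℕ) : ℝ) := by
              rw [Finset.sum_const, nsmul_eq_mul]
      have h1R : ((E \ E').card : ℝ) ≤ (B1.card : ℝ) * ((n:ℝ)-2)
          + (Bad.card : ℝ) * (((n-1).choose 2 : ℕ) : ℝ) := by
        have := (Nat.cast_le (α := ℝ)).mpr h1
        push_cast at this ⊢
        push_cast at hs1 hs2
        linarith
      rw [hc3v]
      rw [hcmv] at h1R
      have hcm_nonneg : (0:ℝ) ≤ ((n:ℝ)-1) * ((n:ℝ)-2)/2 := by nlinarith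
      have hstep1 : (B1.card : ℝ) * ((n:ℝ)-2) ≤ θ * ((n:ℝ) * ((n:ℝ)-1)/2) * ((n:ℝ)-2) := by
        have := mul_le_mul_of_nonneg_right hB1R (by linarith : (0:ℝ) ≤ (n:ℝ)-2)
        rw [hc2v] at this
        linarith
      have hstep2 : (Bad.card : ℝ) * (((n:ℝ)-1) * ((n:ℝ)-2)/2)
          ≤ θ ^ ((1:ℝ)/2) * ((n:ℝ)-1) * (((n:ℝ)-1) * ((n:ℝ)-2)/2) :=
        mul_le_mul_of_nonneg_right hBadR hcm_nonneg
      nlinarith [mul_nonneg (mul_nonneg (sub_nonneg.mpr hθ_le)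
          (by linarith : (0:ℝ) ≤ (n:ℝ)*((n:ℝ)-1))) (by linarith : (0:ℝ) ≤ (n:ℝ)-2),
        mul_nonneg (mul_nonneg h2p.le
          (by linarith : (0:ℝ) ≤ ((n:ℝ)-1)*((n:ℝ)-2))) (by linarith : (0:ℝ) ≤ (n:ℝ)),
        mul_nonneg h2p.le (by nlinarith : (0:ℝ) ≤ ((n:ℝ)-1)*((n:ℝ)-2))]
    -- assemble
    set S' : Finset (Finset V) := S ∪ (univ.filter fun P : Finset V =>
      P.card = 2 ∧ ∃ v ∈ Bad, v ∈ P) with hS'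
    have hS'2 : ∀ P ∈ S', P.card = 2 := by
      intro P hP
      rcases mem_union.mp hP with h | h
      · exact hS2 P h
      · exact (mem_filter.mp h).2.1
    have hS'card : (S'.card : ℝ) ≤ (θ + θ ^ ((1:ℝ)/4)) * n.choose 2 := by
      have hnew : (univ.filter fun P : Finset V => P.card = 2 ∧ ∃ v ∈ Bad, v ∈ P)
          ⊆ Bad.biUnion fun v => (univ.erase v).image fun w => insert v {w} := by
        intro P hP
        obtain ⟨_, hP2, v, hvB, hvP⟩ := mem_filter.mp hP
        refine mem_biUnion.mpr ⟨v, hvB, ?_⟩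
        obtain ⟨w, hw⟩ := Finset.card_eq_one.mp
          (show (P.erase v).card = 1 by rw [Finset.card_erase_of_mem hvP, hP2])
        have hwv : w ≠ v := Finset.ne_of_mem_erase (hw ▸ mem_singleton_self w)
        refine mem_image.mpr ⟨w, mem_erase.mpr ⟨hwv, mem_univ w⟩, ?_⟩
        rw [← Finset.insert_erase hvP, hw]
      have hnewcard : (univ.filter fun P : Finset V =>
          P.card = 2 ∧ ∃ v ∈ Bad, v ∈ P).card ≤ Bad.card * (n-1) := by
        refine le_trans (card_le_card hnew) (le_trans card_biUnion_le ?_)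
        have : ∀ v ∈ Bad, ((univ.erase v).image fun w => (insert v {w} : Finset V)).card ≤ n - 1 := by
          intro v _
          refine le_trans card_image_le ?_
          rw [card_erase_of_mem (mem_univ v), card_univ, ← hn]
        calc ∑ v ∈ Bad, ((univ.erase v).image fun w => (insert v {w} : Finset V)).card
            ≤ ∑ _v ∈ Bad, (n-1) := Finset.sum_le_sum this
          _ = Bad.card * (n-1) := by rw [Finset.sum_const, smul_eq_mul]
      have hc : (S'.card : ℝ) ≤ (S.card : ℝ) + (Bad.card : ℝ) * ((n:ℝ)-1) := by
        have h1 := card_union_le S (univ.filter fun P : Finset V =>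
          P.card = 2 ∧ ∃ v ∈ Bad, v ∈ P)
        have h2R : ((univ.filter fun P : Finset V =>
            P.card = 2 ∧ ∃ v ∈ Bad, v ∈ P).card : ℝ) ≤ (Bad.card : ℝ) * ((n:ℝ)-1) := by
          have := (Nat.cast_le (α := ℝ)).mpr hnewcard
          push_cast [Nat.cast_sub (show 1 ≤ n by omega)] at this
          linarith
        have h1R := (Nat.cast_le (α := ℝ)).mpr h1
        push_cast at h1R
        linarith
      rw [hc2v]
      have hBB : (Bad.card : ℝ) * ((n:ℝ)-1) ≤ θ ^ ((1:ℝ)/2) * ((n:ℝ)-1) * ((n:ℝ)-1) :=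
        mul_le_mul_of_nonneg_right hBadR (by linarith)
      have hSc : (S.card : ℝ) ≤ θ * ((n:ℝ) * ((n:ℝ)-1)/2) := by rw [← hc2v]; exact hScard
      have e1 : θ ^ ((1:ℝ)/2) ≤ (1/2) * θ ^ ((1:ℝ)/4) := by
        calc θ ^ ((1:ℝ)/2) = θ ^ ((1:ℝ)/4) * θ ^ ((1:ℝ)/4) := hmulq.symm
          _ ≤ (1/2) * θ ^ ((1:ℝ)/4) := mul_le_mul_of_nonneg_right hq_half h4p.le
      have e2 : θ ^ ((1:ℝ)/2) * (((n:ℝ)-1)*((n:ℝ)-1))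
          ≤ (1/2) * θ ^ ((1:ℝ)/4) * (((n:ℝ)-1)*((n:ℝ)-1)) :=
        mul_le_mul_of_nonneg_right e1 (mul_self_nonneg _)
      have hnn : ((n:ℝ)-1)*((n:ℝ)-1) ≤ (n:ℝ)*((n:ℝ)-1) :=
        mul_le_mul_of_nonneg_right (by linarith) (by linarith)
      have e3 : (1/2) * θ ^ ((1:ℝ)/4) * (((n:ℝ)-1)*((n:ℝ)-1))
          ≤ θ ^ ((1:ℝ)/4) * ((n:ℝ)*((n:ℝ)-1)/2) := by
        have := mul_le_mul_of_nonneg_left hnn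
          (by positivity : (0:ℝ) ≤ θ ^ ((1:ℝ)/4) / 2)
        linarith
      linarith [hc, hSc, hBB, e2, e3]
    refine ⟨E', filter_subset _ _, ⟨⟨S', hS'2, hS'card, ?_⟩, ?_⟩, hRem⟩
    · -- density for non-exceptional pairs
      intro P hP2 hPS'
      have hPS : P ∉ S := fun h => hPS' (mem_union_left _ h)
      obtain ⟨a, c, hac, rfl⟩ := card_eq_two.mp hP2
      have haB : a ∉ Bad := fun h => hPS' (mem_union_right _ (mem_filter.mpr
        ⟨mem_univ _, hP2, ⟨a, h, mem_insert_self _ _⟩⟩))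
      have hcB : c ∉ Bad := fun h => hPS' (mem_union_right _ (mem_filter.mpr
        ⟨mem_univ _, hP2, ⟨c, h, mem_insert_of_mem (mem_singleton_self c)⟩⟩))
      have hPB1 : ({a,c} : Finset V) ∉ B1 := fun h => hPS (hB1S h)
      exact key a c hac haB hcB hPB1 (hSdeg _ hP2 hPS)
    · -- strong condition
      intro P hP2 hpos
      obtain ⟨e, he⟩ := card_pos.mp hpos
      obtain ⟨heE', hPe⟩ := mem_filter.mp he
      have heE'2 := heE'
      rw [hE', mem_filter] at heE'2
      obtain ⟨heE, hpred⟩ := heE'2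
      obtain ⟨a, c, hac, rfl⟩ := card_eq_two.mp hP2
      have haB : a ∉ Bad := fun h => hpred.2 a h (hPe (mem_insert_self _ _))
      have hcB : c ∉ Bad := fun h => hpred.2 c h (hPe (mem_insert_of_mem (mem_singleton_self c)))
      have hPB1 : ({a,c} : Finset V) ∉ B1 := fun h => hpred.1 _ h hPe
      have hdegE : μ * ((n:ℝ)-2) ≤ ((E.filter fun e => ({a,c}:Finset V) ⊆ e).card : ℝ) := by
        by_contra hlt
        push_neg at hlt
        have hPS : ({a,c} : Finset V) ∈ S := by
          by_contra hPS
          exact absurd (hSdeg _ hP2 hPS) (not_le.mpr hlt)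
        exact hPB1 (mem_filter.mpr ⟨hPS, hlt⟩)
      exact key a c hac haB hcB hPB1 hdegE
end

section
/- Let H be a 3-graph on n vertices, v a vertex, and suppose δ₂(H) > 7n/9. Colour each edge {u,w} of the link graph L(v) by the tight component φ({u,v,w}) of 𝒯(H). Then L(v) contains no path on 4 vertices whose three edges use 3 distinct colours. -/
open Finset
set_option maxHeartbeats 1000000

set_option linter.unusedSectionVars false
set_option linter.unreachableTactic false
set_option linter.unusedTactic false
set_option linter.unnecessarySeqFocus false

/-- The tetrahedral 4-graph of a 3-graph `E`: all 4-sets of vertices all of whose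
3-element subsets are edges of `E`. -/
def tet {V : Type*} [Fintype V] [DecidableEq V] (E : Finset (Finset V)) :
    Finset (Finset V) :=
  (Finset.powersetCard 4 Finset.univ).filter fun K =>
    ∀ t ∈ Finset.powersetCard 3 K, t ∈ E

/-- There is a tight walk in the 4-graph `T` from the edge `e` to the edge `f`:
a vertex sequence starting with the vertices of `e`, ending with the vertices of
`f`, in which every 4 consecutive vertices form an edge of `T`. -/
def TightConn {V : Type*} [DecidableEq V] (T : Finset (Finset V))
    (e f : Finset V) : Prop :=
  ∃ l : List V, 4 ≤ l.length ∧ (l.take 4).toFinset = e ∧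
    (l.drop (l.length - 4)).toFinset = f ∧
    ∀ i, i + 4 ≤ l.length → ((l.drop i).take 4).toFinset ∈ T

/-- The edges `e` and `f` of the 3-graph `E` lie in the same tight component of
the tetrahedral graph `tet E`: some tetrahedron containing `e` is tightly
connected to some tetrahedron containing `f`. -/
def EdgeConn {V : Type*} [Fintype V] [DecidableEq V] (E : Finset (Finset V))
    (e f : Finset V) : Prop :=
  ∃ K K', K ∈ tet E ∧ K' ∈ tet E ∧ e ⊆ K ∧ f ⊆ K' ∧ TightConn (tet E) K K'

/-- The edge `e` of the 3-graph `E` lies in the tight component of the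
tetrahedron `K`. -/
def EdgeInComp {V : Type*} [Fintype V] [DecidableEq V] (E : Finset (Finset V))
    (e K : Finset V) : Prop :=
  ∃ K', K' ∈ tet E ∧ e ⊆ K' ∧ TightConn (tet E) K' K

section Aux

variable {V : Type*} [Fintype V] [DecidableEq V]

lemma card_le_two' (a b : V) : ({a,b} : Finset V).card ≤ 2 :=
  (Finset.card_insert_le _ _).trans (by simp)

lemma card_le_three' (a b c : V) : ({a,b,c} : Finset V).card ≤ 3 :=
  (Finset.card_insert_le _ _).trans (by have := card_le_two' b c; omega)

lemma card_triple' {a b c : V} (hab : a ≠ b) (hac : a ≠ c) (hbc : b ≠ c) :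
    ({a,b,c} : Finset V).card = 3 := by
  rw [Finset.card_insert_of_notMem (by simp [hab, hac]),
    Finset.card_insert_of_notMem (by simp [hbc]), Finset.card_singleton]

lemma quad_ne' {a b c d : V} (h : ({a,b,c,d} : Finset V).card = 4) :
    a ≠ b ∧ a ≠ c ∧ a ≠ d ∧ b ≠ c ∧ b ≠ d ∧ c ≠ d := by
  refine ⟨?_, ?_, ?_, ?_, ?_, ?_⟩ <;> intro heq
  · rw [show ({a,b,c,d}:Finset V) = {b,c,d} from by subst heq; ext j; simp <;> tauto] at h
    have := card_le_three' b c d; omega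
  · rw [show ({a,b,c,d}:Finset V) = {b,c,d} from by subst heq; ext j; simp <;> tauto] at h
    have := card_le_three' b c d; omega
  · rw [show ({a,b,c,d}:Finset V) = {b,c,d} from by subst heq; ext j; simp <;> tauto] at h
    have := card_le_three' b c d; omega
  · rw [show ({a,b,c,d}:Finset V) = {a,c,d} from by subst heq; ext j; simp <;> tauto] at h
    have := card_le_three' a c d; omega
  · rw [show ({a,b,c,d}:Finset V) = {a,c,d} from by subst heq; ext j; simp <;> tauto] at h
    have := card_le_three' a c d; omega
  · rw [show ({a,b,c,d}:Finset V) = {a,b,d} from by subst heq; ext j; simp <;> tauto] at h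
    have := card_le_three' a b d; omega

lemma mem_tet_iff' {E : Finset (Finset V)} {K : Finset V} :
    K ∈ tet E ↔ K.card = 4 ∧ ∀ t ⊆ K, t.card = 3 → t ∈ E := by
  simp only [tet, Finset.mem_filter, Finset.mem_powersetCard, Finset.subset_univ, true_and]
  tauto

lemma ne_of_triple' {E : Finset (Finset V)} (h3 : ∀ e ∈ E, e.card = 3)
    {a b t : V} (h : ({a,b,t} : Finset V) ∈ E) : t ≠ a ∧ t ≠ b := by
  have hc := h3 _ h
  constructor <;> intro heq
  · rw [show ({a,b,t}:Finset V) = {a,b} from by subst heq; ext j; simp <;> tauto] at hc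
    have := card_le_two' a b; omega
  · rw [show ({a,b,t}:Finset V) = {a,b} from by subst heq; ext j; simp <;> tauto] at hc
    have := card_le_two' a b; omega

lemma tet_of' {E : Finset (Finset V)} (h3 : ∀ e ∈ E, e.card = 3)
    {a b c t : V} (hab : a ≠ b) (hac : a ≠ c) (hbc : b ≠ c)
    (h1 : ({a,b,c} : Finset V) ∈ E) (h2 : ({a,b,t} : Finset V) ∈ E)
    (h3' : ({a,c,t} : Finset V) ∈ E) (h4 : ({b,c,t} : Finset V) ∈ E) :
    ({a,b,c,t} : Finset V) ∈ tet E := by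
  obtain ⟨hta, htb⟩ := ne_of_triple' h3 h2
  obtain ⟨-, htc⟩ := ne_of_triple' h3 h3'
  have hc4 : ({a,b,c,t} : Finset V).card = 4 := by
    rw [Finset.card_insert_of_notMem (by simp [hab, hac, hta.symm]),
      card_triple' hbc htb.symm htc.symm]
  rw [mem_tet_iff']
  refine ⟨hc4, fun s hsub hs3 => ?_⟩
  have hdiff : ((({a,b,c,t} : Finset V)) \ s).card = 1 := by
    rw [Finset.card_sdiff_of_subset hsub, hc4, hs3]
  obtain ⟨x, hx⟩ := Finset.card_eq_one.1 hdiff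
  have hxK : x ∈ ({a,b,c,t} : Finset V) ∧ x ∉ s := by
    have : x ∈ (({a,b,c,t} : Finset V)) \ s := hx ▸ Finset.mem_singleton_self x
    exact Finset.mem_sdiff.1 this
  have hs_eq : s = ({a,b,c,t} : Finset V).erase x := by
    have hsub' : s ⊆ ({a,b,c,t} : Finset V).erase x := by
      intro y hy
      rw [Finset.mem_erase]
      exact ⟨fun h => hxK.2 (h ▸ hy), hsub hy⟩
    refine Finset.eq_of_subset_of_card_le hsub' ?_
    rw [Finset.card_erase_of_mem hxK.1, hc4, hs3]
  have hmem := hxK.1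
  simp only [Finset.mem_insert, Finset.mem_singleton] at hmem
  rcases hmem with rfl | rfl | rfl | rfl
  · rw [hs_eq, show ({x,b,c,t} : Finset V).erase x = {b,c,t} from by
      ext j; simp [Finset.mem_erase]; aesop]
    exact h4
  · rw [hs_eq, show ({a,x,c,t} : Finset V).erase x = {a,c,t} from by
      ext j; simp [Finset.mem_erase]; aesop]
    exact h3'
  · rw [hs_eq, show ({a,b,x,t} : Finset V).erase x = {a,b,t} from by
      ext j; simp [Finset.mem_erase]; aesop]
    exact h2
  · rw [hs_eq, show ({a,b,c,x} : Finset V).erase x = {a,b,c} from by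
      ext j; simp [Finset.mem_erase]; aesop]
    exact h1

/-- The codegree neighbourhood of a pair. -/
def codegSet (E : Finset (Finset V)) (a b : V) : Finset V :=
  Finset.univ.filter fun s => ({a,b,s} : Finset V) ∈ E

lemma tet_of_codeg {E : Finset (Finset V)} (h3 : ∀ e ∈ E, e.card = 3)
    {a b c : V} (hab : a ≠ b) (hac : a ≠ c) (hbc : b ≠ c)
    (habc : ({a,b,c} : Finset V) ∈ E) {t : V}
    (ht : t ∈ codegSet E a b ∩ codegSet E a c ∩ codegSet E b c) :
    ({a,b,c,t} : Finset V) ∈ tet E := by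
  simp only [codegSet, Finset.mem_inter, Finset.mem_filter, Finset.mem_univ, true_and] at ht
  exact tet_of' h3 hab hac hbc habc ht.1.1 ht.1.2 ht.2

lemma conn5' {T : Finset (Finset V)} {a b c p q : V}
    (h1 : ({a,b,c,p} : Finset V) ∈ T) (h2 : ({b,c,p,q} : Finset V) ∈ T) :
    TightConn T {a,b,c,p} {b,c,p,q} := by
  refine ⟨[a,b,c,p,q], by simp, by ext j; simp, by ext j; simp, ?_⟩
  intro i hi
  simp only [List.length_cons, List.length_nil] at hi
  have hub : i ≤ 1 := by omega
  interval_cases i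
  · convert h1 using 2; ext j; simp
  · convert h2 using 2; ext j; simp

lemma conn8' {T : Finset (Finset V)} {a b c p q r : V}
    (h1 : ({a,b,c,p} : Finset V) ∈ T) (h2 : ({b,c,p,q} : Finset V) ∈ T)
    (h3 : ({b,c,q,r} : Finset V) ∈ T) :
    TightConn T {a,b,c,p} {q,b,c,r} := by
  refine ⟨[a,b,c,p,q,b,c,r], by simp, by ext j; simp, by ext j; simp <;> tauto, ?_⟩
  intro i hi
  simp only [List.length_cons, List.length_nil] at hi
  have hub : i ≤ 4 := by omega
  interval_cases i
  · convert h1 using 2; ext j; simp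
  · convert h2 using 2; ext j; simp
  · convert h2 using 2; ext j; simp <;> tauto
  · convert h2 using 2; ext j; simp <;> tauto
  · convert h3 using 2; ext j; simp <;> tauto

lemma conn9' {T : Finset (Finset V)} {a b c p q r s : V}
    (h1 : ({a,b,c,p} : Finset V) ∈ T) (h2 : ({b,c,p,q} : Finset V) ∈ T)
    (h3 : ({b,r,p,q} : Finset V) ∈ T) (h4 : ({b,r,p,s} : Finset V) ∈ T) :
    TightConn T {a,b,c,p} {b,r,p,s} := by
  refine ⟨[a,b,c,p,q,b,r,p,s], by simp, by ext j; simp, by ext j; simp <;> tauto, ?_⟩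
  intro i hi
  simp only [List.length_cons, List.length_nil] at hi
  have hub : i ≤ 5 := by omega
  interval_cases i
  · convert h1 using 2; ext j; simp
  · convert h2 using 2; ext j; simp
  · convert h2 using 2; ext j; simp <;> tauto
  · convert h3 using 2; ext j; simp <;> tauto
  · convert h3 using 2; ext j; simp <;> tauto
  · convert h4 using 2; ext j; simp <;> tauto

lemma inter3' (s t u : Finset V)
    (hs : (7:ℝ) * Fintype.card V / 9 < s.card)
    (ht : (7:ℝ) * Fintype.card V / 9 < t.card)
    (hu : (7:ℝ) * Fintype.card V / 9 < u.card) :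
    (Fintype.card V : ℝ) / 3 < ((s ∩ t ∩ u).card : ℝ) := by
  have key : Fintype.card V ≤ (s ∩ t ∩ u).card + (sᶜ.card + tᶜ.card + uᶜ.card) := by
    have hcover : (Finset.univ : Finset V) ⊆ (s ∩ t ∩ u) ∪ (sᶜ ∪ tᶜ ∪ uᶜ) := by
      intro j _
      by_cases hjs : j ∈ s <;> by_cases hjt : j ∈ t <;> by_cases hju : j ∈ u <;>
        simp [hjs, hjt, hju]
    calc Fintype.card V = (Finset.univ : Finset V).card := (Finset.card_univ).symm
      _ ≤ ((s ∩ t ∩ u) ∪ (sᶜ ∪ tᶜ ∪ uᶜ)).card := Finset.card_le_card hcover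
      _ ≤ (s ∩ t ∩ u).card + (sᶜ ∪ tᶜ ∪ uᶜ).card := Finset.card_union_le _ _
      _ ≤ (s ∩ t ∩ u).card + (sᶜ.card + tᶜ.card + uᶜ.card) := by
          have h1 := Finset.card_union_le (sᶜ ∪ tᶜ) uᶜ
          have h2 := Finset.card_union_le sᶜ tᶜ
          omega
  have hsc : (sᶜ.card : ℝ) = Fintype.card V - s.card := by
    rw [Finset.card_compl]
    exact_mod_cast Nat.cast_sub (Finset.card_le_univ s)
  have htc : (tᶜ.card : ℝ) = Fintype.card V - t.card := by
    rw [Finset.card_compl]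
    exact_mod_cast Nat.cast_sub (Finset.card_le_univ t)
  have huc : (uᶜ.card : ℝ) = Fintype.card V - u.card := by
    rw [Finset.card_compl]
    exact_mod_cast Nat.cast_sub (Finset.card_le_univ u)
  have keyR : (Fintype.card V : ℝ) ≤ ((s ∩ t ∩ u).card : ℝ) + (sᶜ.card + tᶜ.card + uᶜ.card) := by
    exact_mod_cast key
  rw [hsc, htc, huc] at keyR
  linarith

lemma pigeon' (A B C : Finset V)
    (hA : (Fintype.card V : ℝ)/3 < A.card) (hB : (Fintype.card V : ℝ)/3 < B.card)
    (hC : (Fintype.card V : ℝ)/3 < C.card)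
    (hAB : ¬(A ∩ B).Nonempty) (hBC : ¬(B ∩ C).Nonempty) : (A ∩ C).Nonempty := by
  by_contra hAC
  rw [Finset.not_nonempty_iff_eq_empty] at hAB hBC hAC
  have d1 : Disjoint A B := Finset.disjoint_iff_inter_eq_empty.2 hAB
  have d2 : Disjoint B C := Finset.disjoint_iff_inter_eq_empty.2 hBC
  have d3 : Disjoint A C := Finset.disjoint_iff_inter_eq_empty.2 hAC
  have hcard : (A ∪ B ∪ C).card = A.card + B.card + C.card := by
    rw [Finset.card_union_of_disjoint (Finset.disjoint_union_left.2 ⟨d3, d2⟩),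
      Finset.card_union_of_disjoint d1]
  have hle : (A ∪ B ∪ C).card ≤ Fintype.card V := Finset.card_le_univ _
  rw [hcard] at hle
  have hR : (A.card : ℝ) + B.card + C.card ≤ Fintype.card V := by exact_mod_cast hle
  linarith

lemma quadperm1 (a b c d : V) : ({a,b,c,d} : Finset V) = {b,a,d,c} := by
  ext j; simp <;> tauto

lemma quadperm2 (a b c d : V) : ({a,b,c,d} : Finset V) = {c,b,d,a} := by
  ext j; simp <;> tauto

lemma quadperm3 (a b c d : V) : ({a,b,c,d} : Finset V) = {a,b,d,c} := by
  ext j; simp <;> tauto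

lemma subD (a b c d : V) : ({b,c,d} : Finset V) ⊆ {a,b,c,d} := by
  intro j hj; simp only [Finset.mem_insert, Finset.mem_singleton] at hj ⊢; tauto

lemma subA (a b c d : V) : ({a,b,c} : Finset V) ⊆ {a,b,c,d} := by
  intro j hj; simp only [Finset.mem_insert, Finset.mem_singleton] at hj ⊢; tauto

lemma subB (a b c d : V) : ({b,a,d} : Finset V) ⊆ {a,b,c,d} := by
  intro j hj; simp only [Finset.mem_insert, Finset.mem_singleton] at hj ⊢; tauto

lemma subC (a b c d : V) : ({c,b,d} : Finset V) ⊆ {a,b,c,d} := by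
  intro j hj; simp only [Finset.mem_insert, Finset.mem_singleton] at hj ⊢; tauto

end Aux

/-- If `δ₂(H) > 7n/9`, then for every vertex `v` the link graph `L(v)`, with
edges coloured by tight components of `𝒯(H)`, contains no path on 4 vertices
whose three edges use three distinct colours. -/
theorem no_rainbow_P4 {V : Type*} [Fintype V] [DecidableEq V]
    (E : Finset (Finset V)) (h3 : ∀ e ∈ E, e.card = 3)
    (hδ : ∀ u v : V, u ≠ v →
      (7 : ℝ) * Fintype.card V / 9 <
        ((Finset.univ.filter fun w' => ({u, v, w'} : Finset V) ∈ E).card : ℝ)) :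
    ¬ ∃ v w x y z : V, ({w, x, y, z} : Finset V).card = 4 ∧
      v ∉ ({w, x, y, z} : Finset V) ∧
      ({w, v, x} : Finset V) ∈ E ∧ ({x, v, y} : Finset V) ∈ E ∧
      ({y, v, z} : Finset V) ∈ E ∧
      ¬ EdgeConn E {w, v, x} {x, v, y} ∧ ¬ EdgeConn E {x, v, y} {y, v, z} ∧
      ¬ EdgeConn E {w, v, x} {y, v, z} := by
  rintro ⟨v, w, x, y, z, hcard, hv, he1, he2, he3, h12, h23, h13⟩
  obtain ⟨hwx, hwy, hwz, hxy, hxz, hyz⟩ := quad_ne' hcard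
  simp only [Finset.mem_insert, Finset.mem_singleton, not_or] at hv
  obtain ⟨hvw, hvx, hvy, hvz⟩ := hv
  have hD : ∀ a b : V, a ≠ b → (7:ℝ) * Fintype.card V / 9 < ((codegSet E a b).card : ℝ) :=
    fun a b hab => by simpa [codegSet] using hδ a b hab
  set A := codegSet E w v ∩ codegSet E w x ∩ codegSet E v x with hAdef
  set B := codegSet E x v ∩ codegSet E x y ∩ codegSet E v y with hBdef
  set C := codegSet E y v ∩ codegSet E y z ∩ codegSet E v z with hCdef
  have hAcard : (Fintype.card V : ℝ)/3 < A.card :=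
    inter3' _ _ _ (hD w v (Ne.symm hvw)) (hD w x hwx) (hD v x hvx)
  have hBcard : (Fintype.card V : ℝ)/3 < B.card :=
    inter3' _ _ _ (hD x v (Ne.symm hvx)) (hD x y hxy) (hD v y hvy)
  have hCcard : (Fintype.card V : ℝ)/3 < C.card :=
    inter3' _ _ _ (hD y v (Ne.symm hvy)) (hD y z hyz) (hD v z hvz)
  have hAtet : ∀ t ∈ A, ({w,v,x,t} : Finset V) ∈ tet E :=
    fun t ht => tet_of_codeg h3 (Ne.symm hvw) hwx hvx he1 ht
  have hBtet : ∀ t ∈ B, ({x,v,y,t} : Finset V) ∈ tet E :=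
    fun t ht => tet_of_codeg h3 (Ne.symm hvx) hxy hvy he2 ht
  have hCtet : ∀ t ∈ C, ({y,v,z,t} : Finset V) ∈ tet E :=
    fun t ht => tet_of_codeg h3 (Ne.symm hvy) hyz hvz he3 ht
  by_cases hAB : (A ∩ B).Nonempty
  · obtain ⟨u, hu⟩ := hAB
    rw [Finset.mem_inter] at hu
    have hKA := hAtet u hu.1
    have hKB := hBtet u hu.2
    have hKB' : ({v,x,u,y} : Finset V) ∈ tet E := by
      rw [quadperm1 v x u y]; exact hKB
    exact h12 ⟨{w,v,x,u}, {v,x,u,y}, hKA, hKB', subA w v x u, subB v x u y,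
      conn5' hKA hKB'⟩
  by_cases hBC : (B ∩ C).Nonempty
  · obtain ⟨u, hu⟩ := hBC
    rw [Finset.mem_inter] at hu
    have hKB := hBtet u hu.1
    have hKC := hCtet u hu.2
    have hKC' : ({v,y,u,z} : Finset V) ∈ tet E := by
      rw [quadperm1 v y u z]; exact hKC
    exact h23 ⟨{x,v,y,u}, {v,y,u,z}, hKB, hKC', subA x v y u, subB v y u z,
      conn5' hKB hKC'⟩
  -- Otherwise, A and C intersect.
  obtain ⟨u, hu⟩ := pigeon' A B C hAcard hBcard hCcard hAB hBC
  rw [Finset.mem_inter] at hu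
  have hKA := hAtet u hu.1
  have hKC := hCtet u hu.2
  obtain ⟨-, -, -, hvx', hvu, hxu⟩ := quad_ne' (mem_tet_iff'.1 hKA).1
  obtain ⟨-, -, hyu, -, -, -⟩ := quad_ne' (mem_tet_iff'.1 hKC).1
  have evxu : ({v,x,u} : Finset V) ∈ E :=
    (mem_tet_iff'.1 hKA).2 _ (subD w v x u) (card_triple' hvx hvu hxu)
  have evyu : ({v,y,u} : Finset V) ∈ E :=
    (mem_tet_iff'.1 hKC).2 _ (subB y v z u) (card_triple' hvy hvu hyu)
  set A' := codegSet E v x ∩ codegSet E v u ∩ codegSet E x u with hA'def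
  set C' := codegSet E v y ∩ codegSet E v u ∩ codegSet E y u with hC'def
  have hA'card : (Fintype.card V : ℝ)/3 < A'.card :=
    inter3' _ _ _ (hD v x hvx) (hD v u hvu) (hD x u hxu)
  have hC'card : (Fintype.card V : ℝ)/3 < C'.card :=
    inter3' _ _ _ (hD v y hvy) (hD v u hvu) (hD y u hyu)
  have hA'tet : ∀ t ∈ A', ({v,x,u,t} : Finset V) ∈ tet E :=
    fun t ht => tet_of_codeg h3 hvx hvu hxu evxu ht
  have hC'tet : ∀ t ∈ C', ({v,y,u,t} : Finset V) ∈ tet E :=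
    fun t ht => tet_of_codeg h3 hvy hvu hyu evyu ht
  by_cases hA'B : (A' ∩ B).Nonempty
  · obtain ⟨t, ht⟩ := hA'B
    rw [Finset.mem_inter] at ht
    have hKt1 := hA'tet t ht.1
    have hKt2 := hBtet t ht.2
    have hKt2' : ({v,x,t,y} : Finset V) ∈ tet E := by
      rw [quadperm1 v x t y]; exact hKt2
    have hKt2'' : ({t,v,x,y} : Finset V) ∈ tet E := by
      rw [quadperm2 t v x y]; exact hKt2
    exact h12 ⟨{w,v,x,u}, {t,v,x,y}, hKA, hKt2'', subA w v x u, subC t v x y,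
      conn8' hKA hKt1 hKt2'⟩
  by_cases hBC' : (B ∩ C').Nonempty
  · obtain ⟨t, ht⟩ := hBC'
    rw [Finset.mem_inter] at ht
    have hKt2 := hBtet t ht.1
    have hKt3 := hC'tet t ht.2
    have hKt3' : ({v,y,t,u} : Finset V) ∈ tet E := by
      rw [quadperm3 v y t u]; exact hKt3
    have hKC'2 : ({v,y,u,z} : Finset V) ∈ tet E := by
      rw [quadperm1 v y u z]; exact hKC
    have hKC'3 : ({u,v,y,z} : Finset V) ∈ tet E := by
      rw [quadperm2 u v y z]; exact hKC
    exact h23 ⟨{x,v,y,t}, {u,v,y,z}, hKt2, hKC'3, subA x v y t, subC u v y z,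
      conn8' hKt2 hKt3' hKC'2⟩
  -- Final case: A' and C' intersect, connecting the first and third colours.
  obtain ⟨t, ht⟩ := pigeon' A' B C' hA'card hBcard hC'card hA'B hBC'
  rw [Finset.mem_inter] at ht
  have hKt1 := hA'tet t ht.1
  have hKt3 := hC'tet t ht.2
  have hKC'2 : ({v,y,u,z} : Finset V) ∈ tet E := by
    rw [quadperm1 v y u z]; exact hKC
  exact h13 ⟨{w,v,x,u}, {v,y,u,z}, hKA, hKC'2, subA w v x u, subB v y u z,
    conn9' hKA hKt1 hKt3 hKC'2⟩
end
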